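/- Let W ≥ 1, I = [0, N−1] ⊂ ℤ, E ∈ ℝ, and (v_i)_{i∈I} real numbers. Consider the strip operator H_I on ℓ²(I × ℤ_W) with fiber-constant potential V_{ij} = v_i, and the one-dimensional operator h_I on ℓ²(I) with potential (v_i). Suppose that for every w ∈ {0,1,…,W−1}, the matrix h_I − E'_w with E'_w = E − 2cos(2πw/W) is invertible, and that for fixed i, i' ∈ I the matrix entries satisfy |(h_I − E'_w)^{-1}(i,i')| < ε for all w. Then H_I − E is invertible on the relevant subspace and |(H_I − E)^{-1}((i,j),(i',j'))| < ε for all j, j' ∈ ℤ_W (assuming additionally that each h_I − E'_w is invertible). -/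

import Mathlib

open MeasureTheory ProbabilityTheory Real Matrix
open scoped ENNReal NNReal

/-- The ℓ² operator norm of a real square matrix. -/
noncomputable def opNorm {n : Type} [Fintype n] [DecidableEq n] (M : Matrix n n ℝ) : ℝ :=
  ‖Matrix.toEuclideanCLM (𝕜 := ℝ) (n := n) M‖

/-- The strip Schrödinger operator `H_I` on `I × ℤ_W`, where `I = [a, a+N-1] ⊂ ℤ`
(indexed by `Fin N`), with potential `V`, Dirichlet boundary conditions in the
first coordinate and periodic boundary conditions in the second coordinate. -/
noncomputable def stripH (W N : ℕ) [NeZero W] (a : ℤ) (V : ℤ → ZMod W → ℝ) :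
    Matrix (Fin N × ZMod W) (Fin N × ZMod W) ℝ :=
  Matrix.of fun p q =>
    (if p = q then V (a + (p.1 : ℕ)) p.2 else 0)
    + (if p.1 = q.1 ∧ q.2 = p.2 + 1 then 1 else 0)
    + (if p.1 = q.1 ∧ q.2 = p.2 - 1 then 1 else 0)
    + (if p.2 = q.2 ∧ (q.1 : ℕ) = (p.1 : ℕ) + 1 then 1 else 0)
    + (if p.2 = q.2 ∧ (p.1 : ℕ) = (q.1 : ℕ) + 1 then 1 else 0)

/-- The one-dimensional Schrödinger operator `h_I` on `I = [a, a+N-1] ⊂ ℤ`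
(indexed by `Fin N`), with potential `v` and Dirichlet boundary conditions. -/
noncomputable def oneDH (N : ℕ) (a : ℤ) (v : ℤ → ℝ) : Matrix (Fin N) (Fin N) ℝ :=
  Matrix.of fun i i' =>
    (if i = i' then v (a + (i : ℕ)) else 0)
    + (if (i' : ℕ) = (i : ℕ) + 1 then 1 else 0)
    + (if (i : ℕ) = (i' : ℕ) + 1 then 1 else 0)

/-- `‖P_{{i}} G P_{{i'}}‖`: the operator norm of the `W × W` block of `G`
corresponding to rows `{i} × ℤ_W` and columns `{i'} × ℤ_W`. -/
noncomputable def blockNorm {W N : ℕ} [NeZero W]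
    (G : Matrix (Fin N × ZMod W) (Fin N × ZMod W) ℝ) (i i' : Fin N) : ℝ :=
  opNorm (Matrix.of fun j j' : ZMod W => G (i, j) (i', j'))



open scoped Kronecker

noncomputable def fexp (W w : ℕ) (d : ℤ) : ℂ :=
  Complex.exp ((2 * Real.pi * w * d / W : ℝ) * Complex.I)

lemma fexp_add (W w : ℕ) (d d' : ℤ) : fexp W w (d + d') = fexp W w d * fexp W w d' := by
  rw [fexp, fexp, fexp, ← Complex.exp_add]
  congr 1
  push_cast
  ring

lemma abs_fexp (W w : ℕ) (d : ℤ) : ‖fexp W w d‖ = 1 :=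
  Complex.norm_exp_ofReal_mul_I _

lemma fexp_int_mul (W w : ℕ) [NeZero W] (k : ℤ) : fexp W w ((W : ℤ) * k) = 1 := by
  have hW : (W : ℂ) ≠ 0 := Nat.cast_ne_zero.mpr (NeZero.ne W)
  rw [fexp]
  convert Complex.exp_int_mul_two_pi_mul_I ((w : ℤ) * k) using 2
  push_cast
  field_simp

lemma fexp_congr (W w : ℕ) [NeZero W] {d d' : ℤ} (h : (d : ZMod W) = (d' : ZMod W)) :
    fexp W w d = fexp W w d' := by
  have h2 := (ZMod.intCast_eq_intCast_iff d d' W).mp h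
  obtain ⟨k, hk⟩ : (W : ℤ) ∣ d' - d := Int.ModEq.dvd h2
  have hd : d' = d + (W : ℤ) * k := by linarith
  rw [hd, fexp_add, fexp_int_mul, mul_one]

lemma zmod_val_intCast (W : ℕ) [NeZero W] (x : ZMod W) : (((x.val : ℤ) : ZMod W)) = x := by
  push_cast
  simp [ZMod.natCast_val, ZMod.cast_id]

lemma fexp_sum (W : ℕ) [NeZero W] (d : ℤ) :
    ∑ w : Fin W, fexp W w d = if (d : ZMod W) = 0 then (W : ℂ) else 0 := by
  have hW : (W : ℝ) ≠ 0 := Nat.cast_ne_zero.mpr (NeZero.ne W)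
  have hz : ∀ w : Fin W, fexp W w d = (fexp W 1 d) ^ (w : ℕ) := by
    intro w
    rw [fexp, fexp, ← Complex.exp_nat_mul]
    congr 1
    push_cast
    ring
  by_cases hd : (d : ZMod W) = 0
  · obtain ⟨k, hk⟩ := (ZMod.intCast_zmod_eq_zero_iff_dvd d W).mp hd
    have h1 : fexp W 1 d = 1 := by rw [hk]; exact fexp_int_mul W 1 k
    simp [hz, h1, hd]
  · have h1 : fexp W 1 d ≠ 1 := by
      intro h1
      rw [fexp] at h1
      obtain ⟨n, hn⟩ := Complex.exp_eq_one_iff.mp h1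
      have h4 : ((2 * Real.pi * ((1:ℕ):ℝ) * (d:ℝ) / W : ℝ) : ℂ) * Complex.I
          = ((n : ℂ) * (2 * Real.pi)) * Complex.I := by rw [hn]; ring
      have h3 := mul_right_cancel₀ Complex.I_ne_zero h4
      have h5 : (2 * Real.pi * ((1:ℕ):ℝ) * (d:ℝ) / W : ℝ) = (n:ℝ) * (2 * Real.pi) := by
        exact_mod_cast h3
      have hπ := Real.pi_ne_zero
      have h6 : (d : ℝ) = (n : ℝ) * W := by
        field_simp at h5
        have h8 : 2 * Real.pi * (d:ℝ) = 2 * Real.pi * ((n:ℝ) * W) := by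
          norm_num at h5; linear_combination (2 * Real.pi) * h5
        exact mul_left_cancel₀ (by positivity) h8
      have h7 : d = n * W := by exact_mod_cast h6
      exact hd ((ZMod.intCast_zmod_eq_zero_iff_dvd d W).mpr ⟨n, by linarith⟩)
    have hzW : (fexp W 1 d) ^ W = 1 := by
      rw [fexp, ← Complex.exp_nat_mul]
      have hWc : (W : ℂ) ≠ 0 := Nat.cast_ne_zero.mpr (NeZero.ne W)
      have h : (W : ℂ) * (((2 * Real.pi * ((1:ℕ):ℝ) * (d:ℝ) / W : ℝ) : ℂ) * Complex.I)
          = (d : ℂ) * (2 * (Real.pi : ℂ) * Complex.I) := by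
        push_cast
        field_simp
      rw [h]
      exact_mod_cast Complex.exp_int_mul_two_pi_mul_I d
    rw [Finset.sum_congr rfl (fun w _ => hz w), Fin.sum_univ_eq_sum_range, geom_sum_eq h1,
      hzW]
    simp [hd]

noncomputable def circM (W : ℕ) [NeZero W] : Matrix (ZMod W) (ZMod W) ℂ :=
  Matrix.of fun j l => (if l = j + 1 then 1 else 0) + (if l = j - 1 then 1 else 0)

noncomputable def charM (W : ℕ) [NeZero W] (w : ℕ) : Matrix (ZMod W) (ZMod W) ℂ :=
  Matrix.of fun j j' => fexp W w ((j.val : ℤ) - (j'.val : ℤ))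

lemma charM_shift (W : ℕ) [NeZero W] (w : ℕ) (c j j' : ZMod W) :
    charM W w (j + c) j' = fexp W w ((c.val : ℤ)) * charM W w j j' := by
  rw [charM, Matrix.of_apply, Matrix.of_apply, ← fexp_add]
  apply fexp_congr
  push_cast
  simp only [ZMod.natCast_val, ZMod.cast_id]
  ring

lemma circ_mul_char (W : ℕ) [NeZero W] (w : ℕ) :
    circM W * charM W w
      = ((2 * Real.cos (2 * Real.pi * w / W) : ℝ) : ℂ) • charM W w := by
  have hj1 : ∀ j j' : ZMod W, charM W w (j + 1) j' = fexp W w ((1 : ZMod W).val : ℤ) * charM W w j j' :=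
    fun j j' => charM_shift W w 1 j j'
  have hj2 : ∀ j j' : ZMod W, charM W w (j - 1) j' = fexp W w (((-1 : ZMod W)).val : ℤ) * charM W w j j' := by
    intro j j'
    rw [sub_eq_add_neg]
    exact charM_shift W w (-1) j j'
  have hcos : fexp W w (((1 : ZMod W)).val : ℤ) + fexp W w (((-1 : ZMod W)).val : ℤ)
      = ((2 * Real.cos (2 * Real.pi * w / W) : ℝ) : ℂ) := by
    have e1 : fexp W w (((1 : ZMod W)).val : ℤ) = fexp W w 1 := by
      apply fexp_congr
      rw [zmod_val_intCast]
      simp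
    have e2 : fexp W w (((-1 : ZMod W)).val : ℤ) = fexp W w (-1) := by
      apply fexp_congr
      rw [zmod_val_intCast]
      simp
    rw [e1, e2, fexp, fexp]
    have a1 : ((2 * Real.pi * w * ((1:ℤ):ℝ) / W : ℝ) : ℂ) = ((2 * Real.pi * w / W : ℝ) : ℂ) := by
      push_cast; ring
    have a2 : ((2 * Real.pi * w * ((-1:ℤ):ℝ) / W : ℝ) : ℂ) = ((-(2 * Real.pi * w / W) : ℝ) : ℂ) := by
      push_cast; ring
    rw [a1, a2, Complex.ofReal_neg, Complex.exp_mul_I, Complex.exp_mul_I, Complex.cos_neg,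
      Complex.sin_neg]
    push_cast [Complex.ofReal_cos]
    ring
  ext j j'
  rw [Matrix.mul_apply]
  simp only [circM, Matrix.of_apply, add_mul, ite_mul, one_mul, zero_mul]
  rw [Finset.sum_add_distrib,
    Finset.sum_ite_eq' Finset.univ (j + 1) (fun l => charM W w l j'),
    Finset.sum_ite_eq' Finset.univ (j - 1) (fun l => charM W w l j')]
  simp only [Finset.mem_univ, if_true]
  rw [hj1 j j', hj2 j j', Matrix.smul_apply, ← hcos, smul_eq_mul]
  ring

lemma charM_sum (W : ℕ) [NeZero W] :
    ∑ w : Fin W, charM W w = (W : ℂ) • (1 : Matrix (ZMod W) (ZMod W) ℂ) := by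
  ext j j'
  rw [Matrix.sum_apply]
  simp only [charM, Matrix.of_apply]
  rw [fexp_sum]
  have hc : ((((j.val : ℤ) - (j'.val : ℤ)) : ℤ) : ZMod W) = j - j' := by
    push_cast
    simp only [ZMod.natCast_val, ZMod.cast_id]
  rw [hc]
  by_cases h : j = j'
  · simp [h, Matrix.one_apply]
  · have hne : ¬ (j - j' = 0) := fun hc2 => h (by rwa [sub_eq_zero] at hc2)
    simp [h, hne, Matrix.one_apply]

lemma strip_decomp (W N : ℕ) [NeZero W] (v : ℤ → ℝ) (E : ℝ) :
    (stripH W N 0 (fun i _ => v i) - E • 1).map Complex.ofReal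
      = ((oneDH N 0 v).map Complex.ofReal) ⊗ₖ (1 : Matrix (ZMod W) (ZMod W) ℂ)
        + (1 : Matrix (Fin N) (Fin N) ℂ) ⊗ₖ circM W
        - (E : ℂ) • 1 := by
  ext ⟨a, b⟩ ⟨c, d⟩
  simp only [Matrix.map_apply, Matrix.sub_apply, Matrix.add_apply, Matrix.smul_apply,
    Matrix.kroneckerMap_apply, stripH, oneDH, circM, Matrix.of_apply, Matrix.one_apply,
    Prod.mk.injEq, smul_eq_mul, mul_one, apply_ite Complex.ofReal]
  by_cases hac : a = c <;> by_cases hbd : b = d <;>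
    simp [hac, hbd, apply_ite Complex.ofReal] <;> push_cast <;> ring

/-- fiber decomposition: entry bound, from the proof of Lemma 2.
Let `W ≥ 1`, `I = [0, N-1] ⊂ ℤ`, `E ∈ ℝ` and `(v_i)` real numbers.  Consider the strip
operator `H_I` with fiber-constant potential `V_{ij} = v_i` and the one-dimensional
operator `h_I` with potential `(v_i)`.  Suppose that for every `w ∈ {0, …, W-1}` the
matrix `h_I − E'_w` with `E'_w = E − 2cos(2πw/W)` is invertible, and for fixed
`i, i' ∈ I` the entries satisfy `|(h_I − E'_w)⁻¹(i,i')| < ε` for all `w`.  Then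
`H_I − E` is invertible and `|(H_I − E)⁻¹((i,j),(i',j'))| < ε` for all `j, j' ∈ ℤ_W`. -/
theorem statement3 (W : ℕ) [NeZero W] (N : ℕ) (v : ℤ → ℝ) (E ε : ℝ) (i i' : Fin N)
    (hinv : ∀ w : Fin W,
      IsUnit (oneDH N 0 v - (E - 2 * Real.cos (2 * Real.pi * w / W)) • 1))
    (hent : ∀ w : Fin W,
      |((oneDH N 0 v - (E - 2 * Real.cos (2 * Real.pi * w / W)) • 1)⁻¹) i i'| < ε) :
    IsUnit (stripH W N 0 (fun i _ => v i) - E • 1) ∧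
    ∀ j j' : ZMod W,
      |((stripH W N 0 (fun i _ => v i) - E • 1)⁻¹) (i, j) (i', j')| < ε := by
  classical
  have hW0 : 0 < W := Nat.pos_of_ne_zero (NeZero.ne W)
  haveI : Nonempty (Fin W) := Fin.pos_iff_nonempty.mp hW0
  have hWc : (W : ℂ) ≠ 0 := Nat.cast_ne_zero.mpr (NeZero.ne W)
  have hWr : (W : ℝ) ≠ 0 := Nat.cast_ne_zero.mpr (NeZero.ne W)
  set M : Matrix (Fin N × ZMod W) (Fin N × ZMod W) ℝ :=
    stripH W N 0 (fun i _ => v i) - E • 1 with hMdef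
  set A : Fin W → Matrix (Fin N) (Fin N) ℝ :=
    fun w => oneDH N 0 v - (E - 2 * Real.cos (2 * Real.pi * w / W)) • 1 with hAdef
  have hentA : ∀ w : Fin W, |((A w)⁻¹) i i'| < ε := hent
  have hinvA : ∀ w : Fin W, IsUnit (A w) := hinv
  set G : Matrix (Fin N × ZMod W) (Fin N × ZMod W) ℂ :=
    (W : ℂ)⁻¹ • ∑ w : Fin W, (((A w)⁻¹).map Complex.ofReal) ⊗ₖ charM W (w : ℕ) with hGdef
  -- map of real matrix products
  have mapmul : ∀ {n : Type} [Fintype n] [DecidableEq n] (P Q : Matrix n n ℝ),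
      (P * Q).map Complex.ofReal = P.map Complex.ofReal * Q.map Complex.ofReal := by
    intro n _ _ P Q
    exact Matrix.map_mul (f := Complex.ofRealHom)
  have hAmap : ∀ w : Fin W, (A w).map Complex.ofReal
      = (oneDH N 0 v).map Complex.ofReal
        - (((E - 2 * Real.cos (2 * Real.pi * w / W) : ℝ)) : ℂ) • 1 := by
    intro w
    ext a c
    by_cases hac : a = c <;>
      simp [hAdef, Matrix.map_apply, Matrix.sub_apply, Matrix.smul_apply, Matrix.one_apply,
        hac, apply_ite Complex.ofReal]
  have hAg : ∀ w : Fin W, (A w).map Complex.ofReal * (((A w)⁻¹).map Complex.ofReal) = 1 := by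
    intro w
    rw [← mapmul, Matrix.mul_nonsing_inv _ ((Matrix.isUnit_iff_isUnit_det _).mp (hinvA w))]
    simp
  have hmain : ∀ w : Fin W,
      (M.map Complex.ofReal) * ((((A w)⁻¹).map Complex.ofReal) ⊗ₖ charM W (w : ℕ))
        = (1 : Matrix (Fin N) (Fin N) ℂ) ⊗ₖ charM W (w : ℕ) := by
    intro w
    rw [hMdef, strip_decomp]
    set g := ((A w)⁻¹).map Complex.ofReal with hg
    have expand : ((oneDH N 0 v).map Complex.ofReal) * g
        = 1 + (((E - 2 * Real.cos (2 * Real.pi * w / W) : ℝ)) : ℂ) • g := by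
      have h1 := hAg w
      rw [hAmap w, Matrix.sub_mul, Matrix.smul_mul, Matrix.one_mul] at h1
      rw [← h1]
      abel
    rw [Matrix.sub_mul, Matrix.add_mul, ← Matrix.mul_kronecker_mul, ← Matrix.mul_kronecker_mul]
    simp only [Matrix.one_mul, Matrix.mul_one, circ_mul_char, Matrix.smul_mul, expand,
      Matrix.kronecker_smul, Matrix.add_kronecker, Matrix.smul_kronecker]
    push_cast
    module
  have hMG : M.map Complex.ofReal * G = 1 := by
    rw [hGdef, Matrix.mul_smul, Finset.mul_sum, Finset.sum_congr rfl (fun w _ => hmain w)]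
    have hsum : ∑ w : Fin W, (1 : Matrix (Fin N) (Fin N) ℂ) ⊗ₖ charM W (w : ℕ)
        = (1 : Matrix (Fin N) (Fin N) ℂ) ⊗ₖ ((W : ℂ) • (1 : Matrix (ZMod W) (ZMod W) ℂ)) := by
      rw [← charM_sum]
      ext ⟨a, b⟩ ⟨c, d⟩
      simp [Matrix.sum_apply, Matrix.kroneckerMap_apply, Finset.mul_sum]
    rw [hsum, Matrix.kronecker_smul, Matrix.one_kronecker_one, smul_smul,
      inv_mul_cancel₀ hWc, one_smul]
  have hdetC : IsUnit (M.map Complex.ofReal).det := by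
    have := congrArg Matrix.det hMG
    rw [Matrix.det_mul, Matrix.det_one] at this
    exact IsUnit.of_mul_eq_one _ this
  have hdet : IsUnit M.det := by
    have hc : ((M.det : ℝ) : ℂ) = (M.map Complex.ofReal).det := by
      have h := RingHom.map_det Complex.ofRealHom M
      simp [RingHom.mapMatrix_apply] at h; exact h
    rw [← hc] at hdetC
    have : (M.det : ℂ) ≠ 0 := hdetC.ne_zero
    have : M.det ≠ 0 := fun h => this (by rw [h]; simp)
    exact isUnit_iff_ne_zero.mpr this
  refine ⟨(Matrix.isUnit_iff_isUnit_det M).mpr hdet, ?_⟩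
  have hinvmap : M⁻¹.map Complex.ofReal = G := by
    have h1 : M.map Complex.ofReal * M⁻¹.map Complex.ofReal = 1 := by
      rw [← mapmul, Matrix.mul_nonsing_inv M hdet]
      simp
    rw [← Matrix.inv_eq_right_inv h1, Matrix.inv_eq_right_inv hMG]
  intro j j'
  have hval : ((M⁻¹ (i, j) (i', j') : ℝ) : ℂ) = G (i, j) (i', j') := by
    rw [← hinvmap]; rfl
  have hGentry : G (i, j) (i', j')
      = (W : ℂ)⁻¹ * ∑ w : Fin W, (((A w)⁻¹ i i' : ℝ) : ℂ) * charM W (w : ℕ) j j' := by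
    simp [hGdef, Matrix.smul_apply, Matrix.sum_apply, Matrix.kroneckerMap_apply,
      Matrix.map_apply, smul_eq_mul]
  have habs : |M⁻¹ (i, j) (i', j')| = ‖G (i, j) (i', j')‖ := by
    rw [← hval, Complex.norm_real, Real.norm_eq_abs]
  rw [habs, hGentry, norm_mul, norm_inv, Complex.norm_natCast]
  have hsumabs : ‖∑ w : Fin W, (((A w)⁻¹ i i' : ℝ) : ℂ) * charM W (w : ℕ) j j'‖
      ≤ ∑ w : Fin W, |((A w)⁻¹) i i'| := by
    refine le_trans (norm_sum_le _ _) (le_of_eq ?_)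
    refine Finset.sum_congr rfl fun w _ => ?_
    rw [norm_mul, Complex.norm_real, Real.norm_eq_abs]
    have : ‖charM W (w : ℕ) j j'‖ = 1 := by
      simp [charM, abs_fexp]
    rw [this, mul_one]
  have hsumlt : ∑ w : Fin W, |((A w)⁻¹) i i'| < (W : ℝ) * ε := by
    have := Finset.sum_lt_sum_of_nonempty (Finset.univ_nonempty (α := Fin W))
      (fun w _ => hentA w)
    simpa [Finset.sum_const, Finset.card_univ, nsmul_eq_mul] using this
  calc (W : ℝ)⁻¹ * ‖∑ w : Fin W, (((A w)⁻¹ i i' : ℝ) : ℂ) * charM W (w : ℕ) j j'‖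
      ≤ (W : ℝ)⁻¹ * ∑ w : Fin W, |((A w)⁻¹) i i'| := by
        apply mul_le_mul_of_nonneg_left hsumabs
        positivity
    _ < (W : ℝ)⁻¹ * ((W : ℝ) * ε) := by
        apply mul_lt_mul_of_pos_left hsumlt
        positivity
    _ = ε := by field_simp
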